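/- arXiv:1711.05641 — 3 statements merged into one kernel-verified Lean document; each statement's English description precedes it below -/
import Mathlib

section
/- For every q ∈ L^∞(Ω) with positive essential infimum, q(x) = sup{ψ(x) : ψ ∈ Σ₊, ψ ≤ q a.e.} for almost every x ∈ Ω, where Σ₊ is the set of density one simple functions on Ω with positive essential infimum. -/
open MeasureTheory Filter Topology

variable {n : ℕ}

/-- `x` is a Lebesgue density one point of the set `E`. -/
def DensityOnePt (E : Set (EuclideanSpace ℝ (Fin n))) (x : EuclideanSpace ℝ (Fin n)) : Prop :=
  Tendsto (fun r : ℝ => volume (E ∩ Metric.ball x r) / volume (Metric.ball x r))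
    (nhdsWithin 0 (Set.Ioi 0)) (nhds 1)

/-- A density one set: non-empty, measurable, and has Lebesgue density one at all of its points. -/
def DensityOneSet (M : Set (EuclideanSpace ℝ (Fin n))) : Prop :=
  M.Nonempty ∧ MeasurableSet M ∧ ∀ x ∈ M, DensityOnePt M x

/-- `Σ₊`: density one simple functions on `Ω` with positive essential infimum, i.e.
`ψ = ∑ⱼ aⱼ χ_{Mⱼ}` with all `aⱼ > 0`, `Mⱼ ⊆ Ω` density one sets, and
`Ω \ ⋃ⱼ Mⱼ` a Lebesgue null set. -/
def SigmaPlus (Ω : Set (EuclideanSpace ℝ (Fin n)))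
    (ψ : EuclideanSpace ℝ (Fin n) → ℝ) : Prop :=
  ∃ (m : ℕ) (a : Fin m → ℝ) (M : Fin m → Set (EuclideanSpace ℝ (Fin n))),
    (∀ j, 0 < a j ∧ DensityOneSet (M j) ∧ M j ⊆ Ω) ∧
    volume (Ω \ ⋃ j, M j) = 0 ∧
    ∀ x, ψ x = ∑ j, a j * Set.indicator (M j) (fun _ => (1 : ℝ)) x

section Helpers
lemma vol_sphere_zero (x : EuclideanSpace ℝ (Fin n)) {r : ℝ} (hr : r ≠ 0) :
    volume (Metric.sphere x r) = 0 :=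
  Measure.addHaar_sphere_of_ne_zero volume x hr

lemma vol_inter_closedBall_eq (A : Set (EuclideanSpace ℝ (Fin n)))
    (x : EuclideanSpace ℝ (Fin n)) {r : ℝ} (hr : 0 < r) :
    volume (A ∩ Metric.closedBall x r) = volume (A ∩ Metric.ball x r) := by
  refine le_antisymm ?_ (measure_mono (Set.inter_subset_inter_right _ Metric.ball_subset_closedBall))
  calc volume (A ∩ Metric.closedBall x r)
      ≤ volume ((A ∩ Metric.ball x r) ∪ Metric.sphere x r) := by
        apply measure_mono
        rintro y ⟨hA, hcB⟩
        rw [← Metric.ball_union_sphere] at hcB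
        rcases hcB with h | h
        · exact Or.inl ⟨hA, h⟩
        · exact Or.inr h
    _ ≤ volume (A ∩ Metric.ball x r) + volume (Metric.sphere x r) := measure_union_le _ _
    _ = volume (A ∩ Metric.ball x r) := by rw [vol_sphere_zero x hr.ne', add_zero]

lemma vol_closedBall_eq (x : EuclideanSpace ℝ (Fin n)) {r : ℝ} (hr : 0 < r) :
    volume (Metric.closedBall x r) = volume (Metric.ball x r) := by
  simpa using vol_inter_closedBall_eq Set.univ x hr

lemma vol_inter_congr {A B : Set (EuclideanSpace ℝ (Fin n))}
    (hAB : volume (A \ B) = 0) (hBA : volume (B \ A) = 0)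
    (s : Set (EuclideanSpace ℝ (Fin n))) : volume (A ∩ s) = volume (B ∩ s) := by
  have key : ∀ (U V : Set (EuclideanSpace ℝ (Fin n))), volume (U \ V) = 0 →
      volume (U ∩ s) ≤ volume (V ∩ s) := by
    intro U V h
    calc volume (U ∩ s) ≤ volume ((V ∩ s) ∪ (U \ V)) := by
          apply measure_mono
          rintro y ⟨hU, hs⟩
          by_cases hV : y ∈ V
          · exact Or.inl ⟨hV, hs⟩
          · exact Or.inr ⟨hU, hV⟩
      _ ≤ volume (V ∩ s) + volume (U \ V) := measure_union_le _ _
      _ = volume (V ∩ s) := by rw [h, add_zero]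
  exact le_antisymm (key A B hAB) (key B A hBA)

lemma DensityOnePt.congr_sets {A B : Set (EuclideanSpace ℝ (Fin n))} {x : EuclideanSpace ℝ (Fin n)}
    (h : DensityOnePt A x) (hAB : volume (A \ B) = 0) (hBA : volume (B \ A) = 0) :
    DensityOnePt B x :=
  h.congr fun r => by rw [vol_inter_congr hAB hBA]

lemma densityOnePt_of_isOpen {U : Set (EuclideanSpace ℝ (Fin n))} (hU : IsOpen U)
    {x : EuclideanSpace ℝ (Fin n)} (hx : x ∈ U) : DensityOnePt U x := by
  obtain ⟨ε, hε, hball⟩ := Metric.isOpen_iff.1 hU x hx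
  refine Tendsto.congr' ?_ (tendsto_const_nhds : Tendsto (fun _ : ℝ => (1:ENNReal)) _ _)
  filter_upwards [Ioo_mem_nhdsGT_of_mem ⟨le_refl (0:ℝ), hε⟩] with r hr
  have h1 : U ∩ Metric.ball x r = Metric.ball x r :=
    Set.inter_eq_self_of_subset_right ((Metric.ball_subset_ball hr.2.le).trans hball)
  rw [h1, ENNReal.div_self (Metric.measure_ball_pos volume x hr.1).ne' measure_ball_lt_top.ne]

lemma ae_densityOnePt {A : Set (EuclideanSpace ℝ (Fin n))} (hA : MeasurableSet A) :
    volume {x | x ∈ A ∧ ¬ DensityOnePt A x} = 0 := by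
  have h := Besicovitch.ae_tendsto_measure_inter_div (volume : Measure (EuclideanSpace ℝ (Fin n))) A
  have h' : ∀ᵐ x ∂(volume : Measure (EuclideanSpace ℝ (Fin n))).restrict A, DensityOnePt A x := by
    filter_upwards [h] with x hx
    refine hx.congr' ?_
    filter_upwards [self_mem_nhdsWithin] with r hr
    rw [vol_inter_closedBall_eq A x hr, vol_closedBall_eq x hr]
  rw [ae_restrict_iff' hA] at h'
  rw [ae_iff] at h'
  convert h' using 2
  ext x
  simp [Classical.not_imp]

lemma tendsto_diff_of_densityOnePt {A : Set (EuclideanSpace ℝ (Fin n))} (hA : MeasurableSet A)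
    {x : EuclideanSpace ℝ (Fin n)} (h : DensityOnePt A x) :
    Tendsto (fun r : ℝ => volume (Metric.ball x r \ A) / volume (Metric.ball x r))
      (𝓝[>] 0) (𝓝 0) := by
  have cont := (ENNReal.continuous_sub_left (a := 1) ENNReal.one_ne_top).tendsto 1
  have := cont.comp h
  simp only [tsub_self] at this
  refine Tendsto.congr' ?_ this
  filter_upwards [self_mem_nhdsWithin] with r hr
  have hfin : volume (Metric.ball x r) ≠ ⊤ := measure_ball_lt_top.ne
  have hpos : volume (Metric.ball x r) ≠ 0 := (Metric.measure_ball_pos volume x hr).ne'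
  have hsum : volume (A ∩ Metric.ball x r) / volume (Metric.ball x r)
      + volume (Metric.ball x r \ A) / volume (Metric.ball x r) = 1 := by
    rw [ENNReal.div_add_div_same, Set.inter_comm, measure_inter_add_diff _ hA,
      ENNReal.div_self hpos hfin]
  have hne : volume (A ∩ Metric.ball x r) / volume (Metric.ball x r) ≠ ⊤ :=
    (ENNReal.div_lt_top (ne_top_of_le_ne_top hfin (measure_mono Set.inter_subset_right)) hpos).ne
  have hsum' : volume (Metric.ball x r \ A) / volume (Metric.ball x r)
      + volume (A ∩ Metric.ball x r) / volume (Metric.ball x r) = 1 := by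
    rw [add_comm]; exact hsum
  exact (ENNReal.eq_sub_of_add_eq hne hsum').symm

lemma densityOnePt_of_tendsto_diff {A : Set (EuclideanSpace ℝ (Fin n))} (hA : MeasurableSet A)
    {x : EuclideanSpace ℝ (Fin n)}
    (h : Tendsto (fun r : ℝ => volume (Metric.ball x r \ A) / volume (Metric.ball x r))
      (𝓝[>] 0) (𝓝 0)) : DensityOnePt A x := by
  have cont := (ENNReal.continuous_sub_left (a := 1) ENNReal.one_ne_top).tendsto 0
  have h2 := cont.comp h
  simp only [tsub_zero] at h2
  refine Tendsto.congr' ?_ h2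
  filter_upwards [self_mem_nhdsWithin] with r hr
  have hfin : volume (Metric.ball x r) ≠ ⊤ := measure_ball_lt_top.ne
  have hpos : volume (Metric.ball x r) ≠ 0 := (Metric.measure_ball_pos volume x hr).ne'
  have hsum : volume (A ∩ Metric.ball x r) / volume (Metric.ball x r)
      + volume (Metric.ball x r \ A) / volume (Metric.ball x r) = 1 := by
    rw [ENNReal.div_add_div_same, Set.inter_comm, measure_inter_add_diff _ hA,
      ENNReal.div_self hpos hfin]
  have hne : volume (Metric.ball x r \ A) / volume (Metric.ball x r) ≠ ⊤ :=
    (ENNReal.div_lt_top (ne_top_of_le_ne_top hfin (measure_mono Set.diff_subset)) hpos).ne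
  exact (ENNReal.eq_sub_of_add_eq hne hsum).symm

lemma DensityOnePt.inter {A B : Set (EuclideanSpace ℝ (Fin n))} {x : EuclideanSpace ℝ (Fin n)}
    (hA : MeasurableSet A) (hB : MeasurableSet B)
    (h1 : DensityOnePt A x) (h2 : DensityOnePt B x) : DensityOnePt (A ∩ B) x := by
  apply densityOnePt_of_tendsto_diff (hA.inter hB)
  have hle : ∀ r : ℝ, volume (Metric.ball x r \ (A ∩ B)) / volume (Metric.ball x r)
      ≤ volume (Metric.ball x r \ A) / volume (Metric.ball x r)
        + volume (Metric.ball x r \ B) / volume (Metric.ball x r) := by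
    intro r
    rw [ENNReal.div_add_div_same]
    apply ENNReal.div_le_div_right
    refine (measure_mono ?_).trans (measure_union_le _ _)
    rintro y ⟨hy, hyAB⟩
    by_cases hyA : y ∈ A
    · exact Or.inr ⟨hy, fun hyB => hyAB ⟨hyA, hyB⟩⟩
    · exact Or.inl ⟨hy, hyA⟩
  have hsum : Tendsto (fun r : ℝ => volume (Metric.ball x r \ A) / volume (Metric.ball x r)
      + volume (Metric.ball x r \ B) / volume (Metric.ball x r)) (𝓝[>] 0) (𝓝 0) := by
    have := (tendsto_diff_of_densityOnePt hA h1).add (tendsto_diff_of_densityOnePt hB h2)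
    simpa using this
  exact tendsto_of_tendsto_of_tendsto_of_le_of_le tendsto_const_nhds hsum
    (fun r => by simp) hle

lemma densityOnePt_finset_inter {ι : Type*} [DecidableEq ι] (s : Finset ι)
    (M : ι → Set (EuclideanSpace ℝ (Fin n))) {x : EuclideanSpace ℝ (Fin n)}
    (U : Set (EuclideanSpace ℝ (Fin n))) (hU : MeasurableSet U) (hUx : DensityOnePt U x)
    (hmeas : ∀ j ∈ s, MeasurableSet (M j)) (hd : ∀ j ∈ s, DensityOnePt (M j) x) :
    DensityOnePt (U ∩ ⋂ j ∈ s, M j) x := by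
  induction s using Finset.induction_on with
  | empty => simpa using hUx
  | @insert a s ha ih =>
    rw [Finset.set_biInter_insert, Set.inter_left_comm]
    have hX : MeasurableSet (U ∩ ⋂ j ∈ s, M j) :=
      hU.inter (Finset.measurableSet_biInter s (fun j hj => hmeas j (Finset.mem_insert_of_mem hj)))
    exact DensityOnePt.inter (hmeas a (Finset.mem_insert_self a s)) hX
      (hd a (Finset.mem_insert_self a s))
      (ih (fun j hj => hmeas j (Finset.mem_insert_of_mem hj))
        (fun j hj => hd j (Finset.mem_insert_of_mem hj)))

lemma tendsto_toReal_ratio {F : Set (EuclideanSpace ℝ (Fin n))} {x : EuclideanSpace ℝ (Fin n)}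
    (h : DensityOnePt F x) :
    Tendsto (fun r : ℝ => (volume (F ∩ Metric.closedBall x r)).toReal
      / (volume (Metric.closedBall x r)).toReal) (𝓝[>] 0) (𝓝 1) := by
  have h' : Tendsto (fun r : ℝ => volume (F ∩ Metric.closedBall x r)
      / volume (Metric.closedBall x r)) (𝓝[>] 0) (𝓝 1) := by
    refine Tendsto.congr' ?_ h
    filter_upwards [self_mem_nhdsWithin] with r hr
    rw [vol_inter_closedBall_eq F x hr, vol_closedBall_eq x hr]
  have h2 := (ENNReal.tendsto_toReal ENNReal.one_ne_top).comp h'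
  rw [ENNReal.toReal_one] at h2
  exact Tendsto.congr (fun r => by simp [Function.comp, ENNReal.toReal_div]) h2
end Helpers

/-- For every `q ∈ L^∞₊(Ω)` on a bounded open set `Ω`, one has
`q(x) = sup { ψ(x) : ψ ∈ Σ₊, ψ ≤ q a.e. }` for almost every `x ∈ Ω`. -/
theorem sup_density_one_simple_functions
    (Ω : Set (EuclideanSpace ℝ (Fin n))) (hΩ : IsOpen Ω) (hΩb : Bornology.IsBounded Ω)
    (q : EuclideanSpace ℝ (Fin n) → ℝ)
    (hq : MemLp q ⊤ (volume.restrict Ω))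
    (hqpos : ∃ c > (0 : ℝ), ∀ᵐ x ∂volume.restrict Ω, c ≤ q x) :
    ∀ᵐ x ∂volume.restrict Ω,
      q x = sSup { t : ℝ | ∃ ψ, SigmaPlus Ω ψ ∧
        (∀ᵐ y ∂volume.restrict Ω, ψ y ≤ q y) ∧ t = ψ x } := by
  classical
  obtain ⟨c, hc0, hcq⟩ := hqpos
  -- measurable representative
  have hqm := hq.1
  set q' : EuclideanSpace ℝ (Fin n) → ℝ := hqm.mk q with hq'def
  have hq'meas : Measurable q' := hqm.stronglyMeasurable_mk.measurable
  have hqq' : q =ᵐ[volume.restrict Ω] q' := hqm.ae_eq_mk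
  -- essential sup bound
  set C : ℝ := (eLpNormEssSup q (volume.restrict Ω)).toReal with hCdef
  have hCfin : eLpNormEssSup q (volume.restrict Ω) ≠ ⊤ := by
    have h2 := hq.2
    rwa [eLpNorm_exponent_top, lt_top_iff_ne_top] at h2
  have hqC : ∀ᵐ y ∂volume.restrict Ω, q y ≤ C := by
    filter_upwards [ae_le_eLpNormEssSup (f := q) (μ := volume.restrict Ω)] with y hy
    have h3 : ((‖q y‖₊ : ENNReal)).toReal ≤ C := ENNReal.toReal_mono hCfin hy
    have h4 : ‖q y‖ ≤ C := by simpa using h3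
    exact (le_abs_self _).trans (by rwa [Real.norm_eq_abs] at h4)
  -- truncated globally defined representative
  set Q : EuclideanSpace ℝ (Fin n) → ℝ :=
    Ω.indicator (fun y => max c (min (q' y) C)) with hQdef
  have hQmeas : Measurable Q :=
    (measurable_const.max (hq'meas.min measurable_const)).indicator hΩ.measurableSet
  have hQbd : ∀ y, ‖Q y‖ ≤ max c C := by
    intro y
    rw [Real.norm_eq_abs]
    by_cases hy : y ∈ Ω
    · rw [hQdef, Set.indicator_of_mem hy]
      have h1 : c ≤ max c (min (q' y) C) := le_max_left _ _
      have h2 : max c (min (q' y) C) ≤ max c C := max_le_max (le_refl c) (min_le_right _ _)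
      rw [abs_of_pos (lt_of_lt_of_le hc0 h1)]
      exact h2
    · rw [hQdef, Set.indicator_of_notMem hy, abs_zero]
      exact le_max_of_le_left hc0.le
  have hQq : Q =ᵐ[volume.restrict Ω] q := by
    filter_upwards [hqq', hcq, hqC, ae_restrict_mem hΩ.measurableSet] with y h1 h2 h3 h4
    rw [hQdef, Set.indicator_of_mem h4, ← h1, min_eq_left h3, max_eq_right h2]
  have hQloc : LocallyIntegrable Q volume := by
    intro x₀
    refine ⟨Metric.ball x₀ 1, Metric.ball_mem_nhds _ one_pos, ?_⟩
    exact Integrable.mono' (integrableOn_const measure_ball_lt_top.ne)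
      hQmeas.aestronglyMeasurable (ae_of_all _ fun y => hQbd y)
  have hLeb : ∀ᵐ x ∂(volume : Measure (EuclideanSpace ℝ (Fin n))),
      Tendsto (fun r : ℝ => ⨍ y in Metric.closedBall x r, ‖Q y - Q x‖) (𝓝[>] 0) (𝓝 0) := by
    filter_upwards [(Besicovitch.vitaliFamily
      (volume : Measure (EuclideanSpace ℝ (Fin n)))).ae_tendsto_average_norm_sub hQloc] with x hx
    exact hx.comp (Besicovitch.tendsto_filterAt _ x)
  -- level sets
  set A : ℕ → ℕ → Set (EuclideanSpace ℝ (Fin n)) :=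
    fun m j => Ω ∩ {y | c + (j : ℝ) * (1 / ((m : ℝ) + 1)) ≤ q' y} with hAdef
  have hAmeas : ∀ m j, MeasurableSet (A m j) := fun m j =>
    hΩ.measurableSet.inter (measurableSet_le measurable_const hq'meas)
  set Z : Set (EuclideanSpace ℝ (Fin n)) :=
    toMeasurable volume (⋃ m, ⋃ j, {x | x ∈ A m j ∧ ¬ DensityOnePt (A m j) x}) with hZdef
  have hZnull : volume Z = 0 := by
    rw [hZdef, measure_toMeasurable]
    exact measure_iUnion_null fun m => measure_iUnion_null fun j => ae_densityOnePt (hAmeas m j)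
  have hZsub : ∀ m j x, x ∈ A m j → ¬ DensityOnePt (A m j) x → x ∈ Z :=
    fun m j x h1 h2 => subset_toMeasurable _ _
      (Set.mem_iUnion.2 ⟨m, Set.mem_iUnion.2 ⟨j, ⟨h1, h2⟩⟩⟩)
  set D : ℕ → ℕ → Set (EuclideanSpace ℝ (Fin n)) := fun m j => A m j \ Z with hDdef
  have hDmeas : ∀ m j, MeasurableSet (D m j) := fun m j =>
    (hAmeas m j).diff (measurableSet_toMeasurable _ _)
  have hDsub : ∀ m j, D m j ⊆ Ω := fun m j y hy => hy.1.1
  have hADnull : ∀ m j, volume (A m j \ D m j) = 0 := fun m j =>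
    measure_mono_null (fun y hy => by
      by_contra h
      exact hy.2 ⟨hy.1, h⟩) hZnull
  have hDAnull : ∀ m j, volume (D m j \ A m j) = 0 := fun m j => by
    rw [Set.diff_eq_empty.2 (fun y hy => hy.1 : D m j ⊆ A m j)]
    exact measure_empty
  have hDden : ∀ m j, ∀ x ∈ D m j, DensityOnePt (D m j) x := by
    intro m j x hx
    have hxA : x ∈ A m j := hx.1
    have hAden : DensityOnePt (A m j) x := by
      by_contra h
      exact hx.2 (hZsub m j x hxA h)
    exact hAden.congr_sets (hADnull m j) (hDAnull m j)
  have hZae : ∀ᵐ x ∂(volume : Measure (EuclideanSpace ℝ (Fin n))), x ∉ Z :=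
    measure_eq_zero_iff_ae_notMem.1 hZnull
  -- the good points
  filter_upwards [ae_restrict_mem hΩ.measurableSet, hqq', hcq, hqC,
    ae_restrict_of_ae hLeb, ae_restrict_of_ae hZae] with x hxΩ hxq' hxc hxC hxLeb hxZ
  have hQx : Q x = q x := by
    rw [hQdef, Set.indicator_of_mem hxΩ, ← hxq', min_eq_left hxC, max_eq_right hxc]
  set Sx : Set ℝ := { t : ℝ | ∃ ψ, SigmaPlus Ω ψ ∧
      (∀ᵐ y ∂volume.restrict Ω, ψ y ≤ q y) ∧ t = ψ x } with hSxdef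
  have hΩden : DensityOneSet Ω :=
    ⟨⟨x, hxΩ⟩, hΩ.measurableSet, fun y hy => densityOnePt_of_isOpen hΩ hy⟩
  -- upper bound : every element of Sx is at most q x
  have hub : ∀ t ∈ Sx, t ≤ q x := by
    rintro t ⟨ψ, ⟨m', a, M, hM, hcov, hψeq⟩, hψle, rfl⟩
    set T : Finset (Fin m') := Finset.univ.filter (fun j => x ∈ M j) with hTdef
    have hψx : ψ x = ∑ j ∈ T, a j := by
      rw [hψeq x, hTdef, Finset.sum_filter]
      refine Finset.sum_congr rfl fun j _ => ?_
      by_cases hj : x ∈ M j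
      · rw [Set.indicator_of_mem hj, if_pos hj, mul_one]
      · rw [Set.indicator_of_notMem hj, if_neg hj, mul_zero]
    by_contra hlt
    push_neg at hlt
    set F : Set (EuclideanSpace ℝ (Fin n)) := Ω ∩ ⋂ j ∈ T, M j with hFdef
    have hFmeas : MeasurableSet F :=
      hΩ.measurableSet.inter (Finset.measurableSet_biInter T fun j _ => (hM j).2.1.2.1)
    have hFden : DensityOnePt F x :=
      densityOnePt_finset_inter T M Ω hΩ.measurableSet (densityOnePt_of_isOpen hΩ hxΩ)
        (fun j _ => (hM j).2.1.2.1)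
        (fun j hj => (hM j).2.1.2.2 x (Finset.mem_filter.1 hj).2)
    have hN : ∀ᵐ y ∂(volume : Measure (EuclideanSpace ℝ (Fin n))),
        y ∈ Ω → (ψ y ≤ q y ∧ q y = Q y) := by
      rw [← ae_restrict_iff' hΩ.measurableSet]
      filter_upwards [hψle, hQq] with y h1 h2
      exact ⟨h1, h2.symm⟩
    set N : Set (EuclideanSpace ℝ (Fin n)) :=
      toMeasurable volume {y | ¬ (y ∈ Ω → (ψ y ≤ q y ∧ q y = Q y))} with hNdef
    have hNnull : volume N = 0 := by
      rw [hNdef, measure_toMeasurable]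
      exact ae_iff.1 hN
    set E : Set (EuclideanSpace ℝ (Fin n)) := F \ N with hEdef
    have hEmeas : MeasurableSet E := hFmeas.diff (measurableSet_toMeasurable _ _)
    have hEbound : ∀ y ∈ E, ψ x - q x ≤ ‖Q y - Q x‖ := by
      intro y hy
      have hyF : y ∈ F := hy.1
      have hyP : y ∈ Ω → (ψ y ≤ q y ∧ q y = Q y) := by
        by_contra h
        exact hy.2 (subset_toMeasurable _ _ h)
      obtain ⟨h1, h2⟩ := hyP hyF.1
      have hψxy : ψ x ≤ ψ y := by
        rw [hψx, hψeq y]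
        have hc : ∀ j ∈ T, a j = a j * Set.indicator (M j) (fun _ => (1:ℝ)) y := by
          intro j hj
          have hyMj : y ∈ M j := by
            have h5 := hyF.2
            rw [Set.mem_iInter₂] at h5
            exact h5 j hj
          rw [Set.indicator_of_mem hyMj, mul_one]
        rw [Finset.sum_congr rfl hc]
        refine Finset.sum_le_sum_of_subset_of_nonneg (Finset.subset_univ T) fun j _ _ => ?_
        exact mul_nonneg (hM j).1.le (Set.indicator_nonneg (fun _ _ => zero_le_one) _)
      have h6 : ψ x - q x ≤ Q y - Q x := by
        rw [hQx]
        rw [h2] at h1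
        have := hψxy.trans h1
        linarith
      rw [Real.norm_eq_abs]
      exact h6.trans (le_abs_self _)
    have hEF : ∀ r : ℝ, volume (E ∩ Metric.closedBall x r)
        = volume (F ∩ Metric.closedBall x r) := by
      intro r
      refine vol_inter_congr ?_ ?_ _
      · rw [Set.diff_eq_empty.2 (Set.diff_subset : F \ N ⊆ F)]
        exact measure_empty
      · refine measure_mono_null (fun y hy => ?_) hNnull
        by_contra h
        exact hy.2 ⟨hy.1, h⟩
    set δ : ℝ := ψ x - q x with hδdef
    have hδpos : 0 < δ := sub_pos.2 hlt
    have key : ∀ r ∈ Set.Ioi (0:ℝ),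
        δ * ((volume (F ∩ Metric.closedBall x r)).toReal
          / (volume (Metric.closedBall x r)).toReal)
        ≤ ⨍ y in Metric.closedBall x r, ‖Q y - Q x‖ := by
      intro r hr
      have hr' : (0:ℝ) < r := hr
      have hcbfin : volume (Metric.closedBall x r) ≠ ⊤ := measure_closedBall_lt_top.ne
      have hint : IntegrableOn (fun y => ‖Q y - Q x‖) (Metric.closedBall x r) volume := by
        refine Integrable.mono' (g := fun _ => max c C + ‖Q x‖)
          (integrableOn_const measure_closedBall_lt_top.ne)
          ((hQmeas.sub measurable_const).norm.aestronglyMeasurable) (ae_of_all _ fun y => ?_)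
        rw [norm_norm]
        exact (norm_sub_le _ _).trans (add_le_add_left (hQbd y) _)
      have h1 : δ * (volume (E ∩ Metric.closedBall x r)).toReal
          ≤ ∫ y in E ∩ Metric.closedBall x r, ‖Q y - Q x‖ :=
        by
        have := setIntegral_ge_of_const_le (hEmeas.inter measurableSet_closedBall)
          (ne_top_of_le_ne_top hcbfin (measure_mono Set.inter_subset_right))
          (fun y hy => hEbound y hy.1)
          (hint.mono_set Set.inter_subset_right)
        rw [smul_eq_mul, mul_comm] at this
        exact this
      have h2 : ∫ y in E ∩ Metric.closedBall x r, ‖Q y - Q x‖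
          ≤ ∫ y in Metric.closedBall x r, ‖Q y - Q x‖ :=
        setIntegral_mono_set hint (ae_of_all _ fun y => norm_nonneg _)
          (HasSubset.Subset.eventuallyLE Set.inter_subset_right)
      rw [hEF r] at h1
      rw [setAverage_eq, smul_eq_mul]
      have hcbpos : 0 < (volume (Metric.closedBall x r)).toReal :=
        ENNReal.toReal_pos (Metric.measure_closedBall_pos volume x hr').ne' hcbfin
      rw [mul_div_assoc', inv_mul_eq_div]
      exact (div_le_div_iff_of_pos_right hcbpos).2 (h1.trans h2)
    have hlim : Tendsto (fun r : ℝ => δ * ((volume (F ∩ Metric.closedBall x r)).toReal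
        / (volume (Metric.closedBall x r)).toReal)) (𝓝[>] 0) (𝓝 (δ * 1)) :=
      (tendsto_toReal_ratio hFden).const_mul δ
    have hfin : δ * 1 ≤ 0 :=
      le_of_tendsto_of_tendsto hlim hxLeb
        (by filter_upwards [self_mem_nhdsWithin] with r hr using key r hr)
    linarith
  -- the constant function c is admissible
  have hmemc : c ∈ Sx := by
    refine ⟨fun y => c * Set.indicator Ω (fun _ => (1:ℝ)) y, ⟨1, fun _ => c, fun _ => Ω,
      fun j => ⟨hc0, hΩden, subset_rfl⟩, ?_, fun y => ?_⟩, ?_, ?_⟩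
    · rw [Set.iUnion_const, Set.diff_self]
      exact measure_empty
    · rw [Fin.sum_univ_one]
    · filter_upwards [hcq, ae_restrict_mem hΩ.measurableSet] with y h1 h2
      rw [Set.indicator_of_mem h2, mul_one]
      exact h1
    · simp [Set.indicator_of_mem hxΩ]
  have hbdd : BddAbove Sx := ⟨q x, hub⟩
  refine le_antisymm ?_ (csSup_le ⟨c, hmemc⟩ hub)
  refine le_of_forall_pos_le_add fun ε hε => ?_
  obtain ⟨m, hm⟩ := exists_nat_one_div_lt hε
  have hε'pos : (0:ℝ) < 1 / ((m : ℝ) + 1) := by positivity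
  set k : ℕ := ⌊(q x - c) / (1 / ((m : ℝ) + 1))⌋₊ with hkdef
  have hqc : (0:ℝ) ≤ q x - c := sub_nonneg.2 hxc
  have hk1 : (k : ℝ) * (1 / ((m : ℝ) + 1)) ≤ q x - c := by
    rw [← le_div_iff₀ hε'pos]
    exact Nat.floor_le (div_nonneg hqc hε'pos.le)
  have hk2 : q x - c < ((k : ℝ) + 1) * (1 / ((m : ℝ) + 1)) := by
    rw [← div_lt_iff₀ hε'pos]
    exact Nat.lt_floor_add_one _
  have hxA : ∀ j : ℕ, j ≤ k → x ∈ A m j := by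
    intro j hj
    refine ⟨hxΩ, ?_⟩
    have h7 : ((j:ℝ)) * (1 / ((m : ℝ) + 1)) ≤ ((k:ℝ)) * (1 / ((m : ℝ) + 1)) :=
      mul_le_mul_of_nonneg_right (Nat.cast_le.2 hj) hε'pos.le
    show c + (j : ℝ) * (1 / ((m : ℝ) + 1)) ≤ q' x
    rw [← hxq']
    linarith
  have hxD : ∀ j : ℕ, j ≤ k → x ∈ D m j := fun j hj => ⟨hxA j hj, hxZ⟩
  set ψ : EuclideanSpace ℝ (Fin n) → ℝ := fun y =>
    ∑ j : Fin (k+1), (if (j:ℕ) = 0 then c else 1/((m:ℝ)+1))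
      * Set.indicator (if (j:ℕ) = 0 then Ω else D m (j:ℕ)) (fun _ => (1 : ℝ)) y with hψdef
  have hψSigma : SigmaPlus Ω ψ := by
    refine ⟨k+1, fun j => if (j:ℕ) = 0 then c else 1/((m:ℝ)+1),
      fun j => if (j:ℕ) = 0 then Ω else D m (j:ℕ), fun j => ?_, ?_, fun y => rfl⟩
    · by_cases hj : (j:ℕ) = 0
      · simp only [if_pos hj]
        exact ⟨hc0, hΩden, subset_rfl⟩
      · simp only [if_neg hj]
        refine ⟨hε'pos, ⟨⟨x, hxD _ (Nat.lt_succ_iff.1 j.isLt)⟩, hDmeas m _,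
          fun y hy => hDden m _ y hy⟩, hDsub m _⟩
    · have hsub : Ω ⊆ ⋃ j : Fin (k+1), (if (j:ℕ) = 0 then Ω else D m (j:ℕ)) := by
        intro y hy
        refine Set.mem_iUnion.2 ⟨0, ?_⟩
        simpa using hy
      rw [Set.diff_eq_empty.2 hsub]
      exact measure_empty
  have hψle : ∀ᵐ y ∂volume.restrict Ω, ψ y ≤ q y := by
    filter_upwards [hcq, hqq', ae_restrict_mem hΩ.measurableSet] with y hyc hyq hyΩ
    have hsplit : ψ y = c + ∑ j : Fin k, (1/((m:ℝ)+1)) *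
        Set.indicator (D m ((j:ℕ)+1)) (fun _ => (1 : ℝ)) y := by
      simp only [hψdef]
      rw [Fin.sum_univ_succ]
      have h00 : (((0 : Fin (k+1))):ℕ) = 0 := rfl
      rw [if_pos h00, if_pos h00, Set.indicator_of_mem hyΩ, mul_one]
      congr 1
    set S' : Finset (Fin k) := Finset.univ.filter (fun j => y ∈ D m ((j:ℕ)+1)) with hS'def
    have hsum2 : ∑ j : Fin k, (1/((m:ℝ)+1)) * Set.indicator (D m ((j:ℕ)+1)) (fun _ => (1:ℝ)) y
        = (S'.card : ℝ) * (1/((m:ℝ)+1)) := by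
      have step : ∑ j : Fin k, (1/((m:ℝ)+1)) * Set.indicator (D m ((j:ℕ)+1)) (fun _ => (1:ℝ)) y
          = ∑ _j ∈ S', (1/((m:ℝ)+1)) := by
        rw [hS'def, Finset.sum_filter]
        refine (Finset.sum_congr rfl fun j _ => ?_).symm
        by_cases hj : y ∈ D m ((j:ℕ)+1)
        · rw [if_pos hj, Set.indicator_of_mem hj, mul_one]
        · rw [if_neg hj, Set.indicator_of_notMem hj, mul_zero]
      rw [step, Finset.sum_const, nsmul_eq_mul]
    rcases Finset.eq_empty_or_nonempty S' with hS'e | hS'ne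
    · rw [hsplit, hsum2, hS'e]
      simp only [Finset.card_empty, Nat.cast_zero, zero_mul, add_zero]
      exact hyc
    · have hJne := hS'ne.image (fun j : Fin k => (j:ℕ)+1)
      set J : ℕ := (S'.image (fun j : Fin k => (j:ℕ)+1)).max' hJne with hJdef
      have hJmem : J ∈ S'.image (fun j : Fin k => (j:ℕ)+1) := Finset.max'_mem _ hJne
      obtain ⟨j₀, hj₀S, hj₀⟩ := Finset.mem_image.1 hJmem
      have hyD : y ∈ D m J := by
        rw [← hj₀]
        exact (Finset.mem_filter.1 hj₀S).2
      have hyA : c + (J:ℝ) * (1/((m:ℝ)+1)) ≤ q' y := hyD.1.2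
      have hcard : (S'.card : ℝ) ≤ (J:ℝ) := by
        have hinj : Function.Injective (fun j : Fin k => (j:ℕ)+1) := by
          intro a b hab
          exact Fin.ext (Nat.succ_injective hab)
        have h1 : S'.card = (S'.image (fun j : Fin k => (j:ℕ)+1)).card :=
          (Finset.card_image_of_injective _ hinj).symm
        have h2 : (S'.image (fun j : Fin k => (j:ℕ)+1)) ⊆ Finset.Icc 1 J := by
          intro i hi
          rcases Finset.mem_image.1 hi with ⟨b, _, rfl⟩
          exact Finset.mem_Icc.2 ⟨Nat.succ_le_succ (Nat.zero_le _), Finset.le_max' _ _ hi⟩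
        have h3 : S'.card ≤ J := by
          rw [h1]
          calc (S'.image (fun j : Fin k => (j:ℕ)+1)).card ≤ (Finset.Icc 1 J).card :=
                Finset.card_le_card h2
            _ = J := by rw [Nat.card_Icc]; omega
        exact_mod_cast h3
      have hmul : (S'.card:ℝ) * (1/((m:ℝ)+1)) ≤ (J:ℝ) * (1/((m:ℝ)+1)) :=
        mul_le_mul_of_nonneg_right hcard hε'pos.le
      rw [← hyq] at hyA
      rw [hsplit, hsum2]
      linarith
  have hψx : ψ x = c + (k:ℝ) * (1/((m:ℝ)+1)) := by
    have hind : ∀ j : Fin k, Set.indicator (D m ((j:ℕ)+1)) (fun _ => (1:ℝ)) x = 1 :=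
      fun j => Set.indicator_of_mem (hxD _ (Nat.succ_le_of_lt j.isLt)) _
    simp only [hψdef]
    rw [Fin.sum_univ_succ]
    have h00 : (((0 : Fin (k+1))):ℕ) = 0 := rfl
    rw [if_pos h00, if_pos h00, Set.indicator_of_mem hxΩ, mul_one]
    congr 1
    have hterm : ∀ j : Fin k,
        (if ((j.succ : Fin (k+1)):ℕ) = 0 then c else 1/((m:ℝ)+1))
          * Set.indicator (if ((j.succ : Fin (k+1)):ℕ) = 0 then Ω else D m ((j.succ : Fin (k+1)):ℕ))
            (fun _ => (1:ℝ)) x = 1/((m:ℝ)+1) := by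
      intro j
      have h0 : ((j.succ : Fin (k+1)) : ℕ) ≠ 0 := by simp [Fin.val_succ]
      rw [if_neg h0, if_neg h0, Fin.val_succ, hind j, mul_one]
    rw [Finset.sum_congr rfl fun j _ => hterm j, Finset.sum_const, Finset.card_univ,
      Fintype.card_fin, nsmul_eq_mul]
  have hmemψ : ψ x ∈ Sx := ⟨ψ, hψSigma, hψle, rfl⟩
  have h5 : ψ x ≤ sSup Sx := le_csSup hbdd hmemψ
  have hm' : 1/((m:ℝ)+1) < ε := hm
  have : q x < sSup Sx + ε := by
    rw [hψx] at h5
    linarith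
  exact this.le
end

section
/- Abstract converse monotonicity via localized potentials: Let Ω ⊆ ℝⁿ be bounded open, q₀, q₁ ∈ L^∞(Ω), and suppose that for every measurable M ⊆ Ω of positive measure there exists a sequence (uᵏ) in a set S ⊆ L²(Ω) with ∫_M |uᵏ|² → ∞ and ∫_{Ω∖M}|uᵏ|² → 0. If inf_{u ∈ S} ∫_Ω (q₁ − q₀)|u|² dx > −∞, then q₀ ≤ q₁ almost everywhere in Ω. -/
open MeasureTheory Filter Topology

variable {n : ℕ}

/-- Abstract converse monotonicity via localized potentials: if for every positive measure
subset `M ⊆ Ω` there is a sequence in `S ⊆ L²(Ω)` whose energy blows up on `M` and vanishes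
on `Ω ∖ M`, and `∫_Ω (q₁ - q₀)|u|² dx` is bounded below over `u ∈ S`, then `q₀ ≤ q₁`
almost everywhere in `Ω`. -/
theorem abstract_converse_monotonicity
    (Ω : Set (EuclideanSpace ℝ (Fin n))) (hΩ : IsOpen Ω) (hΩb : Bornology.IsBounded Ω)
    (q₀ q₁ : EuclideanSpace ℝ (Fin n) → ℝ)
    (hq₀ : MemLp q₀ ⊤ (volume.restrict Ω)) (hq₁ : MemLp q₁ ⊤ (volume.restrict Ω))
    (S : Set (EuclideanSpace ℝ (Fin n) → ℝ))
    (hSL2 : ∀ u ∈ S, MemLp u 2 (volume.restrict Ω))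
    (hloc : ∀ M : Set (EuclideanSpace ℝ (Fin n)), MeasurableSet M → M ⊆ Ω → 0 < volume M →
      ∃ u : ℕ → EuclideanSpace ℝ (Fin n) → ℝ, (∀ k, u k ∈ S) ∧
        Tendsto (fun k => ∫ x in M, (u k x) ^ 2) atTop atTop ∧
        Tendsto (fun k => ∫ x in Ω \ M, (u k x) ^ 2) atTop (nhds 0))
    (hbdd : ∃ c : ℝ, ∀ u ∈ S, c ≤ ∫ x in Ω, (q₁ x - q₀ x) * (u x) ^ 2) :
    ∀ᵐ x ∂volume.restrict Ω, q₀ x ≤ q₁ x := by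
  set μ := volume.restrict Ω with hμdef
  by_contra hcon
  -- measurable representatives
  set g₀ := hq₀.1.mk q₀ with hg₀def
  set g₁ := hq₁.1.mk q₁ with hg₁def
  have hg₀m : StronglyMeasurable g₀ := hq₀.1.stronglyMeasurable_mk
  have hg₁m : StronglyMeasurable g₁ := hq₁.1.stronglyMeasurable_mk
  have hg₀e : q₀ =ᵐ[μ] g₀ := hq₀.1.ae_eq_mk
  have hg₁e : q₁ =ᵐ[μ] g₁ := hq₁.1.ae_eq_mk
  have hcon' : ¬ ∀ᵐ x ∂μ, g₀ x ≤ g₁ x := by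
    intro h
    exact hcon <| (h.and (hg₀e.and hg₁e)).mono fun x ⟨h1, h2, h3⟩ => by rw [h2, h3]; exact h1
  have hNne : μ {x | g₁ x < g₀ x} ≠ 0 := by
    intro h0
    exact hcon' (by rw [ae_iff]; simpa [not_le] using h0)
  -- find a level set of positive measure
  have hsub : {x | g₁ x < g₀ x} ⊆ ⋃ k : ℕ, {x | g₁ x + 1 / (k + 1) ≤ g₀ x} := by
    intro x hx
    obtain ⟨k, hk⟩ := exists_nat_one_div_lt (K := ℝ) (sub_pos.2 hx)
    exact Set.mem_iUnion.2 ⟨k, by simp only [Set.mem_setOf_eq]; linarith⟩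
  have hNk : ∃ k : ℕ, μ {x | g₁ x + 1 / (k + 1) ≤ g₀ x} ≠ 0 := by
    by_contra hall
    push_neg at hall
    exact hNne (measure_mono_null hsub (measure_iUnion_null hall))
  obtain ⟨k, hk⟩ := hNk
  set δ : ℝ := 1 / (k + 1) with hδdef
  have hδpos : (0:ℝ) < δ := by positivity
  set M : Set (EuclideanSpace ℝ (Fin n)) := {x | g₁ x + δ ≤ g₀ x} ∩ Ω with hMdef
  have hNkm : MeasurableSet {x | g₁ x + δ ≤ g₀ x} :=
    measurableSet_le (hg₁m.measurable.add measurable_const) hg₀m.measurable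
  have hMm : MeasurableSet M := hNkm.inter hΩ.measurableSet
  have hMΩ : M ⊆ Ω := Set.inter_subset_right
  have hMpos : 0 < volume M := by
    rw [pos_iff_ne_zero]
    intro h0
    exact hk (by rw [hμdef, Measure.restrict_apply hNkm]; exact h0)
  obtain ⟨u, huS, htop, hzero⟩ := hloc M hMm hMΩ hMpos
  obtain ⟨c, hc⟩ := hbdd
  -- the essential sup bound on f = q₁ - q₀
  set f : EuclideanSpace ℝ (Fin n) → ℝ := fun x => q₁ x - q₀ x with hfdef
  have hf : MemLp f ⊤ μ := hq₁.sub hq₀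
  set C : ℝ := (eLpNormEssSup f μ).toReal with hCdef
  have hCfin : eLpNormEssSup f μ ≠ ⊤ := by
    have := hf.2
    rw [eLpNorm_exponent_top] at this
    exact this.ne
  have hC : ∀ᵐ x ∂μ, |f x| ≤ C := by
    filter_upwards [ae_le_eLpNormEssSup (f := f) (μ := μ)] with x hx
    rw [← Real.norm_eq_abs]
    simpa using ENNReal.toReal_mono hCfin hx
  -- f ≤ -δ a.e. on M
  have hfM : ∀ᵐ x ∂volume.restrict M, f x ≤ -δ := by
    have h1 : ∀ᵐ x ∂volume.restrict M, q₀ x = g₀ x ∧ q₁ x = g₁ x :=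
      ae_restrict_of_ae_restrict_of_subset hMΩ (hg₀e.and hg₁e)
    have h2 : ∀ᵐ x ∂volume.restrict M, x ∈ M := ae_restrict_mem hMm
    filter_upwards [h1, h2] with x ⟨hx0, hx1⟩ hxM
    have : g₁ x + δ ≤ g₀ x := hxM.1
    simp only [hfdef, hx0, hx1]
    linarith
  have hCM : ∀ᵐ x ∂volume.restrict (Ω \ M), |f x| ≤ C :=
    ae_restrict_of_ae_restrict_of_subset Set.diff_subset hC
  -- main estimate per k
  have key : ∀ j : ℕ, c ≤ -δ * (∫ x in M, (u j x) ^ 2) + C * (∫ x in Ω \ M, (u j x) ^ 2) := by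
    intro j
    have huL2 := hSL2 (u j) (huS j)
    have hsq : Integrable (fun x => (u j x) ^ 2) μ := huL2.integrable_sq
    have hfsq : Integrable (fun x => f x * (u j x) ^ 2) μ :=
      hsq.bdd_mul (hf.1) (by simpa [Real.norm_eq_abs] using hC)
    have hsqΩ : IntegrableOn (fun x => (u j x) ^ 2) Ω volume := hsq
    have hfsqΩ : IntegrableOn (fun x => f x * (u j x) ^ 2) Ω volume := hfsq
    have hsqM : IntegrableOn (fun x => (u j x) ^ 2) M volume := hsqΩ.mono_set hMΩ
    have hsqD : IntegrableOn (fun x => (u j x) ^ 2) (Ω \ M) volume :=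
      hsqΩ.mono_set Set.diff_subset
    have hfsqM : IntegrableOn (fun x => f x * (u j x) ^ 2) M volume := hfsqΩ.mono_set hMΩ
    have hfsqD : IntegrableOn (fun x => f x * (u j x) ^ 2) (Ω \ M) volume :=
      hfsqΩ.mono_set Set.diff_subset
    have hsplit : (∫ x in Ω ∩ M, f x * (u j x) ^ 2) + (∫ x in Ω \ M, f x * (u j x) ^ 2)
        = ∫ x in Ω, f x * (u j x) ^ 2 := integral_inter_add_diff hMm hfsq
    rw [Set.inter_eq_self_of_subset_right hMΩ] at hsplit
    have hb1 : (∫ x in M, f x * (u j x) ^ 2) ≤ ∫ x in M, -δ * (u j x) ^ 2 := by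
      refine integral_mono_ae hfsqM (hsqM.const_mul _) ?_
      filter_upwards [hfM] with x hx
      exact mul_le_mul_of_nonneg_right hx (sq_nonneg _)
    have hb2 : (∫ x in Ω \ M, f x * (u j x) ^ 2) ≤ ∫ x in Ω \ M, C * (u j x) ^ 2 := by
      refine integral_mono_ae hfsqD (hsqD.const_mul _) ?_
      filter_upwards [hCM] with x hx
      exact mul_le_mul_of_nonneg_right ((abs_le.1 hx).2) (sq_nonneg _)
    have := hc (u j) (huS j)
    rw [integral_const_mul] at hb1 hb2
    calc c ≤ ∫ x in Ω, f x * (u j x) ^ 2 := this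
      _ = (∫ x in M, f x * (u j x) ^ 2) + (∫ x in Ω \ M, f x * (u j x) ^ 2) := hsplit.symm
      _ ≤ -δ * (∫ x in M, (u j x) ^ 2) + C * (∫ x in Ω \ M, (u j x) ^ 2) :=
          add_le_add hb1 hb2
  -- contradiction with the limit
  have hlim : Tendsto (fun j => -δ * (∫ x in M, (u j x) ^ 2)
      + C * (∫ x in Ω \ M, (u j x) ^ 2)) atTop atBot := by
    have h1 : Tendsto (fun j => -δ * (∫ x in M, (u j x) ^ 2)) atTop atBot :=
      (tendsto_const_mul_atBot_of_neg (by linarith : -δ < 0)).2 htop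
    have h2 : Tendsto (fun j => C * (∫ x in Ω \ M, (u j x) ^ 2)) atTop (nhds 0) := by
      simpa using hzero.const_mul C
    have h2' : ∀ᶠ j in atTop, C * (∫ x in Ω \ M, (u j x) ^ 2) ≤ 1 :=
      h2.eventually (eventually_le_nhds (by norm_num))
    exact tendsto_atBot_add_right_of_ge' atTop 1 h1 h2'
  obtain ⟨j, hj⟩ := (hlim.eventually (eventually_lt_atBot c)).exists
  exact absurd (key j) (not_le.2 hj)
end

section
/- Fréchet derivative estimate for the DtN map (abstract form): Let q ∈ L^∞(Ω) with ess inf q > 0 and r ∈ L^∞(Ω) with ess inf(q + r) > 0. Suppose the symmetric bounded operators Λ(q+r) − Λ(q) − Λ'(q)r satisfy, for all F with ‖F‖ = 1, the two-sided bound 0 ≥ ⟨(Λ(q+r) − Λ(q) − Λ'(q)r)F, F⟩ ≥ ∫_Ω (q r/(q+r) − r)|u_q(F)|² dx, where ‖u_q(F)‖_{L²(Ω)} ≤ K. Then ‖Λ(q+r) − Λ(q) − Λ'(q)r‖ ≤ K² ‖r‖_{L^∞} · ‖r/(q+r)‖_{L^∞}, and consequently ‖Λ(q+r) − Λ(q)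 − Λ'(q)r‖ / ‖r‖_{L^∞} → 0 as ‖r‖_{L^∞} → 0. -/
open MeasureTheory Filter Topology

lemma ae_norm_le_toReal {α : Type*} {m : MeasurableSpace α} {μ : Measure α}
    {f : α → ℝ} (hf : MemLp f ⊤ μ) :
    ∀ᵐ x ∂μ, |f x| ≤ (eLpNorm f ⊤ μ).toReal := by
  have h := ae_le_eLpNormEssSup (f := f) (μ := μ)
  have hfin : eLpNormEssSup f μ ≠ ⊤ := by
    rw [← eLpNorm_exponent_top]; exact hf.2.ne
  filter_upwards [h] with x hx
  have : ((‖f x‖₊ : ENNReal)).toReal ≤ (eLpNormEssSup f μ).toReal :=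
    ENNReal.toReal_mono hfin hx
  simpa [Real.norm_eq_abs, ← eLpNorm_exponent_top] using this

variable {n : ℕ}

/-- Fréchet derivative estimate for the DtN map (abstract form). `A r` stands for the
symmetric quadratic form of `Λ(q+r) - Λ(q) - Λ'(q)r` on the space `H` of exterior data,
`u r F` stands for the solution `u_q(F)` (which does not depend on `r`, but is kept general),
and `Adm r` collects the admissibility of the perturbation `r` together with the two-sided
quadratic form bound. The conclusion is the norm estimate
`‖Λ(q+r) - Λ(q) - Λ'(q)r‖ ≤ K²‖r‖_∞‖r/(q+r)‖_∞` (with the norm computed as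
`sup_{‖F‖=1} |⟨A F, F⟩|`), and the consequent `o(‖r‖_∞)` behaviour as `‖r‖_∞ → 0`. -/
theorem frechet_derivative_estimate
    {H : Type*} [NormedAddCommGroup H] [InnerProductSpace ℝ H]
    (Ω : Set (EuclideanSpace ℝ (Fin n)))
    (q : EuclideanSpace ℝ (Fin n) → ℝ)
    (hq : MemLp q ⊤ (volume.restrict Ω))
    (c : ℝ) (hc : 0 < c) (hqc : ∀ᵐ x ∂volume.restrict Ω, c ≤ q x)
    (K : ℝ) (hK : 0 ≤ K)
    -- the quadratic form of `Λ(q+r) - Λ(q) - Λ'(q)r` and the solution operator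
    (A : (EuclideanSpace ℝ (Fin n) → ℝ) → H → H → ℝ)
    (u : H → EuclideanSpace ℝ (Fin n) → ℝ)
    (hsym : ∀ r F G, A r F G = A r G F)
    (huL2 : ∀ F : H, MemLp (u F) 2 (volume.restrict Ω))
    (huK : ∀ F : H, ‖F‖ = 1 → ∫ x in Ω, (u F x) ^ 2 ≤ K ^ 2)
    -- admissibility of the perturbation `r`, including the two-sided quadratic form bound
    (Adm : (EuclideanSpace ℝ (Fin n) → ℝ) → Prop)
    (hAdm : ∀ r, Adm r →
      MemLp r ⊤ (volume.restrict Ω) ∧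
      (∃ c' > (0 : ℝ), ∀ᵐ x ∂volume.restrict Ω, c' ≤ q x + r x) ∧
      (∀ F : H, ‖F‖ = 1 →
        A r F F ≤ 0 ∧
        ∫ x in Ω, (q x * r x / (q x + r x) - r x) * (u F x) ^ 2 ≤ A r F F)) :
    (∀ r, Adm r → ∀ F : H, ‖F‖ = 1 →
      |A r F F| ≤ K ^ 2 * (eLpNorm r ⊤ (volume.restrict Ω)).toReal *
        (eLpNorm (fun x => r x / (q x + r x)) ⊤ (volume.restrict Ω)).toReal) ∧
    (∀ ε > (0 : ℝ), ∃ δ > (0 : ℝ), ∀ r, Adm r →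
      (eLpNorm r ⊤ (volume.restrict Ω)).toReal ≤ δ →
      ∀ F : H, ‖F‖ = 1 →
        |A r F F| ≤ ε * (eLpNorm r ⊤ (volume.restrict Ω)).toReal) := by
  set μ := volume.restrict Ω with hμdef
  have part1 : ∀ r, Adm r → ∀ F : H, ‖F‖ = 1 →
      |A r F F| ≤ K ^ 2 * (eLpNorm r ⊤ μ).toReal *
        (eLpNorm (fun x => r x / (q x + r x)) ⊤ μ).toReal := by
    intro r hr F hF
    obtain ⟨hrL, ⟨c', hc', hqr⟩, hquad⟩ := hAdm r hr
    obtain ⟨hA0, hlow⟩ := hquad F hF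
    set Mr := (eLpNorm r ⊤ μ).toReal with hMrdef
    have hMr0 : 0 ≤ Mr := ENNReal.toReal_nonneg
    have hrae : ∀ᵐ x ∂μ, |r x| ≤ Mr := ae_norm_le_toReal hrL
    have hsmeas : AEStronglyMeasurable (fun x => r x / (q x + r x)) μ :=
      ((hrL.1.aemeasurable).div ((hq.1.aemeasurable).add hrL.1.aemeasurable)).aestronglyMeasurable
    have hsL : MemLp (fun x => r x / (q x + r x)) ⊤ μ := by
      apply memLp_top_of_bound hsmeas (Mr / c')
      filter_upwards [hrae, hqr] with x h1 h2
      have h3 : 0 < q x + r x := lt_of_lt_of_le hc' h2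
      rw [Real.norm_eq_abs, abs_div, abs_of_pos h3]
      exact div_le_div₀ hMr0 h1 hc' h2
    set Ms := (eLpNorm (fun x => r x / (q x + r x)) ⊤ μ).toReal with hMsdef
    have hMs0 : 0 ≤ Ms := ENNReal.toReal_nonneg
    have hsae : ∀ᵐ x ∂μ, |r x / (q x + r x)| ≤ Ms := ae_norm_le_toReal hsL
    -- the integrand bound
    have hu2 : Integrable (fun x => (u F x) ^ 2) μ := (huL2 F).integrable_sq
    have hgm : AEStronglyMeasurable
        (fun x => (r x - q x * r x / (q x + r x)) * (u F x) ^ 2) μ :=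
      ((hrL.1.aemeasurable.sub ((hq.1.aemeasurable.mul hrL.1.aemeasurable).div
        (hq.1.aemeasurable.add hrL.1.aemeasurable))).mul
        ((huL2 F).1.aemeasurable.pow_const 2)).aestronglyMeasurable
    have hgbdd : ∀ᵐ x ∂μ,
        0 ≤ (r x - q x * r x / (q x + r x)) * (u F x) ^ 2 ∧
        (r x - q x * r x / (q x + r x)) * (u F x) ^ 2 ≤ Mr * Ms * (u F x) ^ 2 := by
      filter_upwards [hrae, hsae, hqr] with x h1 h2 h3
      have h4 : 0 < q x + r x := lt_of_lt_of_le hc' h3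
      have h5 : r x - q x * r x / (q x + r x) = r x * (r x / (q x + r x)) := by
        field_simp; ring
      have h6 : 0 ≤ u F x ^ 2 := sq_nonneg _
      constructor
      · rw [h5]
        apply mul_nonneg _ h6
        rw [mul_div_assoc']
        exact div_nonneg (mul_self_nonneg _) h4.le
      · rw [h5]
        apply mul_le_mul_of_nonneg_right _ h6
        calc r x * (r x / (q x + r x)) ≤ |r x * (r x / (q x + r x))| := le_abs_self _
          _ = |r x| * |r x / (q x + r x)| := abs_mul _ _
          _ ≤ Mr * Ms := mul_le_mul h1 h2 (abs_nonneg _) hMr0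
    have hgint : Integrable (fun x => (r x - q x * r x / (q x + r x)) * (u F x) ^ 2) μ := by
      apply Integrable.mono' (hu2.const_mul (Mr * Ms)) hgm
      filter_upwards [hgbdd] with x ⟨h0, h1⟩
      rw [Real.norm_eq_abs, abs_of_nonneg h0]; exact h1
    have hint : ∫ x, (r x - q x * r x / (q x + r x)) * (u F x) ^ 2 ∂μ
        ≤ Mr * Ms * K ^ 2 := by
      calc ∫ x, (r x - q x * r x / (q x + r x)) * (u F x) ^ 2 ∂μ
          ≤ ∫ x, Mr * Ms * (u F x) ^ 2 ∂μ := by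
            apply integral_mono_ae hgint (hu2.const_mul _)
            filter_upwards [hgbdd] with x ⟨_, h1⟩ using h1
        _ = Mr * Ms * ∫ x, (u F x) ^ 2 ∂μ := integral_const_mul _ _
        _ ≤ Mr * Ms * K ^ 2 := by
            apply mul_le_mul_of_nonneg_left _ (mul_nonneg hMr0 hMs0)
            exact huK F hF
    have hneg : -(A r F F) ≤ ∫ x, (r x - q x * r x / (q x + r x)) * (u F x) ^ 2 ∂μ := by
      have := neg_le_neg hlow
      rw [← integral_neg] at this
      simpa [neg_sub, sub_mul, neg_mul] using this.trans_eq (by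
        apply integral_congr_ae
        filter_upwards with x
        ring)
    rw [abs_of_nonpos hA0]
    calc -(A r F F) ≤ Mr * Ms * K ^ 2 := hneg.trans hint
      _ = K ^ 2 * Mr * Ms := by ring
  refine ⟨part1, ?_⟩
  intro ε hε
  refine ⟨min (c / 2) (ε * c / (2 * (K ^ 2 + 1))), by positivity, ?_⟩
  intro r hr hMr F hF
  obtain ⟨hrL, ⟨c', hc', hqr⟩, hquad⟩ := hAdm r hr
  set Mr := (eLpNorm r ⊤ μ).toReal with hMrdef
  have hMr0 : 0 ≤ Mr := ENNReal.toReal_nonneg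
  have hrae : ∀ᵐ x ∂μ, |r x| ≤ Mr := ae_norm_le_toReal hrL
  have hδ1 : Mr ≤ c / 2 := hMr.trans (min_le_left _ _)
  have hδ2 : Mr ≤ ε * c / (2 * (K ^ 2 + 1)) := hMr.trans (min_le_right _ _)
  have hsb : ∀ᵐ x ∂μ, ‖r x / (q x + r x)‖ ≤ 2 * Mr / c := by
    filter_upwards [hrae, hqc] with x h1 h2
    have h3 : c / 2 ≤ q x + r x := by
      have := abs_le.1 h1
      linarith [this.1]
    have h4 : 0 < q x + r x := lt_of_lt_of_le (by linarith) h3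
    rw [Real.norm_eq_abs, abs_div, abs_of_pos h4]
    rw [div_le_div_iff₀ h4 hc]
    calc |r x| * c ≤ Mr * c := mul_le_mul_of_nonneg_right h1 hc.le
      _ ≤ 2 * Mr * (c / 2) := by ring_nf; linarith [mul_le_mul_of_nonneg_left h3 hMr0]
      _ ≤ 2 * Mr * (q x + r x) := by
          apply mul_le_mul_of_nonneg_left h3 (by linarith)
  have hMs : (eLpNorm (fun x => r x / (q x + r x)) ⊤ μ).toReal ≤ 2 * Mr / c := by
    apply ENNReal.toReal_le_of_le_ofReal (by positivity)
    rw [eLpNorm_exponent_top]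
    exact eLpNormEssSup_le_of_ae_bound hsb
  have h1 := part1 r hr F hF
  calc |A r F F| ≤ K ^ 2 * Mr * (eLpNorm (fun x => r x / (q x + r x)) ⊤ μ).toReal := h1
    _ ≤ K ^ 2 * Mr * (2 * Mr / c) := by
        apply mul_le_mul_of_nonneg_left hMs (by positivity)
    _ ≤ ε * Mr := by
        have h2 : Mr * (2 * (K ^ 2 + 1)) ≤ ε * c := by
          rw [le_div_iff₀ (by positivity)] at hδ2
          linarith
        have h3 : K ^ 2 * Mr * (2 * Mr / c) = 2 * K ^ 2 * Mr ^ 2 / c := by ring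
        rw [h3, div_le_iff₀ hc]
        nlinarith [mul_le_mul_of_nonneg_left h2 hMr0, sq_nonneg Mr]
end
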